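/- Let C be a convex subset of a topological real vector space, and let A, B be faces of C with closure(A) ≠ closure(B). Then fri A ∩ fri B = ∅. -/

import Mathlib

open Pointwise

/-- A face of a convex set `C`: a convex subset `F ⊆ C` such that whenever a point of `F`
lies in the open segment between two points of `C`, both endpoints belong to `F`. -/
def IsFace {X : Type*} [AddCommGroup X] [Module ℝ X] (C F : Set X) : Prop :=
  F ⊆ C ∧ Convex ℝ F ∧
    ∀ x ∈ F, ∀ y ∈ C, ∀ z ∈ C, x ∈ openSegment ℝ y z → y ∈ F ∧ z ∈ F

/-- The minimal face of `C` containing `x`: the intersection of all faces containing `x`. -/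
def minFace {X : Type*} [AddCommGroup X] [Module ℝ X] (C : Set X) (x : X) : Set X :=
  ⋂₀ {F | IsFace C F ∧ x ∈ F}

/-- The conic hull of a set. -/
def coneHull {X : Type*} [AddCommGroup X] [Module ℝ X] (S : Set X) : Set X :=
  {w | ∃ (a : ℝ) (s : X), 0 ≤ a ∧ s ∈ S ∧ w = a • s}

/-- The intrinsic core of a convex set. -/
def icr {X : Type*} [AddCommGroup X] [Module ℝ X] (C : Set X) : Set X :=
  {x ∈ C | ∀ y ∈ C, ∃ z ∈ C, x ∈ openSegment ℝ y z}

/-- The face relative interior of a convex set in a topological vector space. -/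
def fri {X : Type*} [AddCommGroup X] [Module ℝ X] [TopologicalSpace X] (C : Set X) : Set X :=
  {x ∈ C | C ⊆ closure (minFace C x)}

section Aux

variable {X : Type*} [AddCommGroup X] [Module ℝ X]

lemma isFace_self {C : Set X} (hC : Convex ℝ C) : IsFace C C :=
  ⟨subset_rfl, hC, fun _ _ _ hy _ hz _ => ⟨hy, hz⟩⟩

lemma isFace_minFace {C : Set X} (hC : Convex ℝ C) {x : X} (hx : x ∈ C) :
    IsFace C (minFace C x) := by
  refine ⟨?_, ?_, ?_⟩
  · intro y hy
    exact hy C ⟨isFace_self hC, hx⟩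
  · intro a ha b hb t s ht hs hts
    intro F hF
    exact hF.1.2.1 (ha F hF) (hb F hF) ht hs hts
  · intro w hw y hy z hz hseg
    exact ⟨fun F hF => (hF.1.2.2 w (hw F hF) y hy z hz hseg).1,
           fun F hF => (hF.1.2.2 w (hw F hF) y hy z hz hseg).2⟩

lemma mem_minFace {C : Set X} {x : X} : x ∈ minFace C x :=
  fun _ hF => hF.2

lemma minFace_subset {C F : Set X} (hF : IsFace C F) {x : X} (hx : x ∈ F) :
    minFace C x ⊆ F := fun _ h => h F ⟨hF, hx⟩

/-- A face of a face is a face. -/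
lemma isFace_trans {C A F : Set X} (hA : IsFace C A) (hF : IsFace A F) : IsFace C F := by
  refine ⟨hF.1.trans hA.1, hF.2.1, ?_⟩
  intro w hw y hy z hz hseg
  obtain ⟨hyA, hzA⟩ := hA.2.2 w (hF.1 hw) y hy z hz hseg
  exact hF.2.2 w hw y hyA z hzA hseg

/-- A face of `C` contained in a face `A` is a face of `A`. -/
lemma isFace_of_subset {C A F : Set X} (hA : IsFace C A) (hF : IsFace C F) (hFA : F ⊆ A) :
    IsFace A F :=
  ⟨hFA, hF.2.1, fun w hw y hy z hz hseg => hF.2.2 w hw y (hA.1 hy) z (hA.1 hz) hseg⟩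

lemma minFace_face_eq {C A : Set X} (hC : Convex ℝ C) (hA : IsFace C A) {x : X} (hx : x ∈ A) :
    minFace A x = minFace C x := by
  apply subset_antisymm
  · exact minFace_subset (isFace_of_subset hA (isFace_minFace hC (hA.1 hx))
      (minFace_subset hA hx)) mem_minFace
  · intro y hy F hF
    exact hy F ⟨isFace_trans hA hF.1, hF.2⟩

end Aux

/-- faces of `C` that are not closure-equivalent have disjoint
face relative interiors. -/
theorem fri_disjoint_of_closure_ne {X : Type*} [AddCommGroup X] [Module ℝ X]
    [TopologicalSpace X] [IsTopologicalAddGroup X] [ContinuousSMul ℝ X]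
    (C A B : Set X) (hC : Convex ℝ C) (hA : IsFace C A) (hB : IsFace C B)
    (hne : closure A ≠ closure B) :
    fri A ∩ fri B = ∅ := by
  by_contra h
  obtain ⟨x, hxA, hxB⟩ := Set.nonempty_iff_ne_empty.2 h
  have key : ∀ (D : Set X), IsFace C D → x ∈ fri D → closure D = closure (minFace C x) := by
    intro D hD hx
    apply subset_antisymm
    · have := hx.2
      rw [minFace_face_eq hC hD hx.1] at this
      calc closure D ⊆ closure (closure (minFace C x)) := closure_mono this
        _ = closure (minFace C x) := closure_closure
    · exact closure_mono (minFace_subset hD hx.1)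
  exact hne ((key A hA hxA).trans (key B hB hxB).symm)
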